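/- Let N be a positive integer, let (ι, 𝒜, μ) be a probability space, and let P : ι → Matrix (Fin N) (Fin N) ℝ be a measurable family of matrices such that for every s ∈ ι, P s is symmetric and idempotent (an orthogonal projection matrix), and s ↦ P s is Bochner integrable with respect to μ. Set Q = ∫ P s ∂μ(s). Then Q is symmetric positive semidefinite, and for every vector e ∈ ℝ^N, ∫ ‖(P s) e‖² ∂μ(s) = ⟨e, Q e⟩ = ‖Q^{1/2} e‖², where Q^{1/2} denotes the positive semidefinite square root of Q. -/

import Mathlib

open MeasureTheory Matrix

/-- **Lemma 1 (ENSURE paper).** Let `(ι, μ)` be a probability space and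
`P : ι → Matrix (Fin N) (Fin N) ℝ` a measurable, integrable family of orthogonal projection
matrices (symmetric and idempotent).  Let `Q = ∫ P s ∂μ` (entrywise Bochner integral).
Then `Q` is symmetric positive semidefinite and, for every `e : ℝ^N`,
`∫ ‖P s e‖² ∂μ = ⟨e, Q e⟩ = ‖W e‖²` where `W` is the positive semidefinite square root
of `Q` (i.e. `W` is PSD with `W * W = Q`). -/
theorem ensemble_projection_weighted_mse
    {N : ℕ} (hN : 0 < N) {ι : Type*} [MeasurableSpace ι]
    (μ : Measure ι) [IsProbabilityMeasure μ]
    (P : ι → Matrix (Fin N) (Fin N) ℝ)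
    (hPmeas : ∀ i j, Measurable (fun s => P s i j))
    (hPsymm : ∀ s, (P s).IsSymm)
    (hPidem : ∀ s, P s * P s = P s)
    (hPint : ∀ i j, Integrable (fun s => P s i j) μ)
    (Q : Matrix (Fin N) (Fin N) ℝ)
    (hQ : ∀ i j, Q i j = ∫ s, P s i j ∂μ) :
    Q.PosSemidef ∧
      ∀ e : Fin N → ℝ,
        (∫ s, ((P s).mulVec e) ⬝ᵥ ((P s).mulVec e) ∂μ) = e ⬝ᵥ Q.mulVec e ∧
        ∀ W : Matrix (Fin N) (Fin N) ℝ, W.PosSemidef → W * W = Q →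
          e ⬝ᵥ Q.mulVec e = (W.mulVec e) ⬝ᵥ (W.mulVec e) := by
  -- pointwise identity
  have hpt : ∀ s (e : Fin N → ℝ),
      ((P s).mulVec e) ⬝ᵥ ((P s).mulVec e) = e ⬝ᵥ (P s).mulVec e := by
    intro s e
    rw [Matrix.dotProduct_mulVec, ← Matrix.mulVec_transpose, (hPsymm s).eq,
      Matrix.mulVec_mulVec, hPidem s, dotProduct_comm, Matrix.dotProduct_mulVec,
      ← Matrix.mulVec_transpose, (hPsymm s).eq]
  -- integral swap
  have key : ∀ e : Fin N → ℝ,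
      (∫ s, e ⬝ᵥ (P s).mulVec e ∂μ) = e ⬝ᵥ Q.mulVec e := by
    intro e
    have hexp : ∀ (A : Matrix (Fin N) (Fin N) ℝ),
        e ⬝ᵥ A.mulVec e = ∑ i, ∑ j, e i * A i j * e j := by
      intro A
      simp [dotProduct, Matrix.mulVec, Finset.mul_sum, mul_assoc]
    simp_rw [hexp]
    rw [MeasureTheory.integral_finset_sum]
    · refine Finset.sum_congr rfl fun i _ => ?_
      rw [MeasureTheory.integral_finset_sum]
      · refine Finset.sum_congr rfl fun j _ => ?_
        have : (fun s => e i * P s i j * e j) = fun s => (e i * e j) * P s i j := by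
          funext s; ring
        rw [this, MeasureTheory.integral_const_mul, ← hQ]
        ring
      · exact fun j _ => by
          have : (fun s => e i * P s i j * e j) = fun s => (e i * e j) * P s i j := by
            funext s; ring
          rw [this]; exact (hPint i j).const_mul _
    · intro i _
      refine integrable_finset_sum _ fun j _ => ?_
      have : (fun s => e i * P s i j * e j) = fun s => (e i * e j) * P s i j := by
        funext s; ring
      rw [this]; exact (hPint i j).const_mul _
  have hQsymm : Q.IsSymm := by
    ext i j
    simp only [Matrix.transpose_apply, hQ]
    exact integral_congr_ae (Filter.Eventually.of_forall fun s => ((hPsymm s).apply i j))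
  have hquad : ∀ e : Fin N → ℝ,
      (∫ s, ((P s).mulVec e) ⬝ᵥ ((P s).mulVec e) ∂μ) = e ⬝ᵥ Q.mulVec e := by
    intro e; rw [← key e]; exact integral_congr_ae (Filter.Eventually.of_forall fun s => hpt s e)
  constructor
  · rw [Matrix.posSemidef_iff_dotProduct_mulVec]; constructor
    · rw [Matrix.IsHermitian]
      ext i j
      simpa using congrFun (congrFun hQsymm i) j
    · intro e
      have h1 : (0:ℝ) ≤ ∫ s, ((P s).mulVec e) ⬝ᵥ ((P s).mulVec e) ∂μ :=
        integral_nonneg fun s => by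
          simpa [dotProduct] using Finset.sum_nonneg fun j _ => mul_self_nonneg _
      have h2 : (0:ℝ) ≤ e ⬝ᵥ Q.mulVec e := (hquad e) ▸ h1
      simpa using h2
  · intro e
    refine ⟨hquad e, fun W hW hWQ => ?_⟩
    have hWsymm : Wᵀ = W := by simpa [Matrix.IsSymm] using hW.1
    rw [← hWQ, ← Matrix.mulVec_mulVec, dotProduct_comm, Matrix.dotProduct_mulVec,
      ← Matrix.mulVec_transpose, hWsymm, dotProduct_comm, Matrix.dotProduct_mulVec,
      ← Matrix.mulVec_transpose, hWsymm]
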